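/- Let x ∈ ℝⁿ be nonzero with ⟨u₁,x⟩_A > 0, and assume ρ(x)² ≤ 1/(4·δ·(δ−1)) and sin² ∠_A(u₁,x) ≤ δ/(2δ − 1). Then ‖u₁ − x/‖x‖_A‖_A ≤ 2·sin( (1/2)·arcsin( √(δ·b_δ(ρ(x))) · ρ(x) ) ), where b_δ(ρ) = 2δ / (1 + 2δρ² + √(1 − 4(δ−1)δρ²)); moreover δ·b_δ(ρ(x))·ρ(x)² ≤ 1 so the arcsine argument lies in [0,1]. -/

import Mathlib

open Matrix Real

/-- Euclidean inner product weighted by the matrix `A`: `⟨x,y⟩_A = ⟨Ax,y⟩`. -/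
noncomputable def ipA {n : ℕ} (A : Matrix (Fin n) (Fin n) ℝ) (x y : Fin n → ℝ) : ℝ :=
  A.mulVec x ⬝ᵥ y

/-- The `A`-norm `‖x‖_A = √⟨Ax,x⟩`. -/
noncomputable def normA {n : ℕ} (A : Matrix (Fin n) (Fin n) ℝ) (x : Fin n → ℝ) : ℝ :=
  Real.sqrt (ipA A x x)

/-- The `A`-angle `∠_A(u,x) ∈ [0,π]`. -/
noncomputable def angleA {n : ℕ} (A : Matrix (Fin n) (Fin n) ℝ) (u x : Fin n → ℝ) : ℝ :=
  Real.arccos (ipA A u x / (normA A u * normA A x))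

/-- The generalized Rayleigh quotient `λ(x) = ⟨Ax,x⟩/⟨Ex,x⟩`. -/
noncomputable def rayleigh {n : ℕ} (A E : Matrix (Fin n) (Fin n) ℝ) (x : Fin n → ℝ) : ℝ :=
  (A.mulVec x ⬝ᵥ x) / (E.mulVec x ⬝ᵥ x)

/-- The residual `r(x) = Ax − λ(x)·Ex`. -/
noncomputable def residualA {n : ℕ} (A E : Matrix (Fin n) (Fin n) ℝ) (x : Fin n → ℝ) :
    Fin n → ℝ :=
  A.mulVec x - rayleigh A E x • E.mulVec x

/-- The normalized residual `ρ(x) = ‖r(x)‖_{A⁻¹} / ‖x‖_A`. -/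
noncomputable def rhoRes {n : ℕ} (A E : Matrix (Fin n) (Fin n) ℝ) (x : Fin n → ℝ) : ℝ :=
  Real.sqrt (A⁻¹.mulVec (residualA A E x) ⬝ᵥ residualA A E x) / normA A x

/-- The factor `b_δ(ρ) = 2δ / (1 + 2δρ² + √(1 − 4(δ−1)δρ²))`. -/
noncomputable def bdelta (δ ρ : ℝ) : ℝ :=
  2 * δ / (1 + 2 * δ * ρ ^ 2 + Real.sqrt (1 - 4 * (δ - 1) * δ * ρ ^ 2))

lemma herm_dot {n : ℕ} {M : Matrix (Fin n) (Fin n) ℝ} (hM : M.IsHermitian)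
    (u v : Fin n → ℝ) : M.mulVec u ⬝ᵥ v = M.mulVec v ⬝ᵥ u := by
  have hMT : Mᵀ = M := by ext i j; simpa using hM.apply i j
  rw [dotProduct_comm, Matrix.dotProduct_mulVec, ← Matrix.mulVec_transpose, hMT]


lemma inner_eq_dot {n : ℕ} (a c : EuclideanSpace ℝ (Fin n)) :
    (inner ℝ a c : ℝ) = (a : Fin n → ℝ) ⬝ᵥ (c : Fin n → ℝ) := by
  simp [PiLp.inner_apply, dotProduct, mul_comm]


lemma psd_cs {n : ℕ} {M : Matrix (Fin n) (Fin n) ℝ} (hM : M.PosSemidef)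
    (u v : Fin n → ℝ) :
    (M.mulVec u ⬝ᵥ v) ^ 2 ≤ (M.mulVec u ⬝ᵥ u) * (M.mulVec v ⬝ᵥ v) := by
  have key : ∀ t : ℝ, 0 ≤ (M.mulVec v ⬝ᵥ v) * (t * t) + (2 * (M.mulVec u ⬝ᵥ v)) * t
      + (M.mulVec u ⬝ᵥ u) := by
    intro t
    have h0 := hM.dotProduct_mulVec_nonneg (u + t • v)
    simp only [star_trivial] at h0
    have hexp : (u + t • v) ⬝ᵥ M.mulVec (u + t • v)
        = (M.mulVec v ⬝ᵥ v) * (t * t) + (2 * (M.mulVec u ⬝ᵥ v)) * t + (M.mulVec u ⬝ᵥ u) := by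
    -- expand
      rw [Matrix.mulVec_add, Matrix.mulVec_smul]
      rw [add_dotProduct, smul_dotProduct, dotProduct_add, dotProduct_add,
        dotProduct_smul, dotProduct_smul]
      have h1 : u ⬝ᵥ M.mulVec v = M.mulVec u ⬝ᵥ v := by
        rw [dotProduct_comm, herm_dot hM.1]
      have h2 : u ⬝ᵥ M.mulVec u = M.mulVec u ⬝ᵥ u := dotProduct_comm _ _
      have h3 : v ⬝ᵥ M.mulVec v = M.mulVec v ⬝ᵥ v := dotProduct_comm _ _
      have h4 : v ⬝ᵥ M.mulVec u = M.mulVec u ⬝ᵥ v := dotProduct_comm _ _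
      simp only [smul_eq_mul, h1, h2, h3, h4]
      ring
    rw [hexp] at h0
    exact h0
  have hd : discrim (M.mulVec v ⬝ᵥ v) (2 * (M.mulVec u ⬝ᵥ v)) (M.mulVec u ⬝ᵥ u) ≤ 0 := discrim_le_zero key
  unfold discrim at hd
  nlinarith [hd]

open scoped MatrixOrder in
lemma complement_bound {n : ℕ} (A E : Matrix (Fin n) (Fin n) ℝ) (hA : A.PosDef) (hE : E.PosDef)
    (lam1 lam2 : ℝ) (u1 : Fin n → ℝ)
    (hu1 : A.mulVec u1 = lam1 • E.mulVec u1)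
    (h1pos : 0 < lam1) (h2pos : 0 < lam2)
    (hsimple : ∀ v : Fin n → ℝ, A.mulVec v = lam1 • E.mulVec v → ∃ c : ℝ, v = c • u1)
    (hmin : ∀ μ : ℝ, (∃ v : Fin n → ℝ, v ≠ 0 ∧ A.mulVec v = μ • E.mulVec v) →
      μ = lam1 ∨ lam2 ≤ μ)
    (w : Fin n → ℝ) (hw : A.mulVec u1 ⬝ᵥ w = 0) :
    lam2 * (E.mulVec w ⬝ᵥ w) ≤ A.mulVec w ⬝ᵥ w := by
  classical
  set F := CFC.sqrt E with hFdef
  have hFh : F.IsHermitian := (CFC.sqrt_nonneg E).posSemidef.1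
  have hFF : F * F = E := CFC.sqrt_mul_sqrt_self E hE.posSemidef.nonneg
  have hdet : IsUnit F.det := by
    have hm : F.det * F.det = E.det := by rw [← det_mul, hFF]
    have hEdet := hE.det_pos
    refine isUnit_iff_ne_zero.mpr fun h => ?_
    rw [h, mul_zero] at hm
    exact hEdet.ne' hm.symm
  have hFiF : F⁻¹ * F = 1 := nonsing_inv_mul F hdet
  have hFFi : F * F⁻¹ = 1 := mul_nonsing_inv F hdet
  have hFih : F⁻¹.IsHermitian := hFh.inv
  set B := F⁻¹ * A * F⁻¹ with hBdef
  have hB : B.IsHermitian := by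
    unfold Matrix.IsHermitian
    rw [hBdef, conjTranspose_mul, conjTranspose_mul, hFih.eq, hA.1.eq, mul_assoc]
  set b := hB.eigenvectorBasis with hbdef
  set μ := hB.eigenvalues with hμdef
  have heig : ∀ i, B *ᵥ (b i : Fin n → ℝ) = μ i • (b i : Fin n → ℝ) :=
    fun i => hB.mulVec_eigenvectorBasis i
  have hFiFv : ∀ v : Fin n → ℝ, F⁻¹ *ᵥ (F *ᵥ v) = v := by
    intro v; rw [Matrix.mulVec_mulVec, hFiF, Matrix.one_mulVec]
  have hFFiv : ∀ v : Fin n → ℝ, F *ᵥ (F⁻¹ *ᵥ v) = v := by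
    intro v; rw [Matrix.mulVec_mulVec, hFFi, Matrix.one_mulVec]
  have hcase : ∀ i, (∃ c : ℝ, (b i : Fin n → ℝ) = c • (F *ᵥ u1)) ∨ lam2 ≤ μ i := by
    intro i
    set z := F⁻¹ *ᵥ (b i : Fin n → ℝ) with hzdef
    have hbne : (b i : Fin n → ℝ) ≠ 0 := by
      have h0 := b.orthonormal.ne_zero i
      intro h
      apply h0
      ext j
      exact congrFun h j
    have hzne : z ≠ 0 := by
      intro h
      apply hbne
      have h2 : F *ᵥ z = F *ᵥ (0 : Fin n → ℝ) := by rw [h]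
      rw [hzdef, hFFiv, Matrix.mulVec_zero] at h2
      exact h2
    have hEz : E *ᵥ z = F *ᵥ (b i : Fin n → ℝ) := by
      rw [hzdef, ← hFF, ← Matrix.mulVec_mulVec, hFFiv]
    have h1 : F⁻¹ *ᵥ (A *ᵥ z) = μ i • (b i : Fin n → ℝ) := by
      rw [hzdef, Matrix.mulVec_mulVec, Matrix.mulVec_mulVec, ← hBdef]
      exact heig i
    have hAz : A *ᵥ z = μ i • (F *ᵥ (b i : Fin n → ℝ)) := by
      have h2 := congrArg (fun v => F *ᵥ v) h1
      simp only at h2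
      rw [hFFiv, Matrix.mulVec_smul] at h2
      exact h2
    have hpencil : A *ᵥ z = μ i • E *ᵥ z := by rw [hAz, hEz]
    rcases hmin (μ i) ⟨z, hzne, hpencil⟩ with h1' | h2'
    · left
      rcases hsimple z (by rw [hpencil, h1']) with ⟨c, hc⟩
      refine ⟨c, ?_⟩
      have h2 : F *ᵥ z = F *ᵥ (c • u1) := by rw [hc]
      rw [hzdef, hFFiv, Matrix.mulVec_smul] at h2
      exact h2
    · right; exact h2'
  set y := F *ᵥ w with hydef
  have hEy : E *ᵥ w ⬝ᵥ w = y ⬝ᵥ y := by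
    have h1 : E *ᵥ w = F *ᵥ y := by rw [hydef, Matrix.mulVec_mulVec, hFF]
    rw [h1, herm_dot hFh y w, hydef]
  have hAy : A *ᵥ w ⬝ᵥ w = B *ᵥ y ⬝ᵥ y := by
    have h1 : B *ᵥ y = F⁻¹ *ᵥ (A *ᵥ w) := by
      rw [hydef, hBdef, ← Matrix.mulVec_mulVec, hFiFv, Matrix.mulVec_mulVec]
    rw [h1, herm_dot hFih (A *ᵥ w) y, hydef, hFiFv, dotProduct_comm]
  have horth : (F *ᵥ u1) ⬝ᵥ y = 0 := by
    have h1 : (F *ᵥ u1) ⬝ᵥ y = (F *ᵥ y) ⬝ᵥ u1 := herm_dot hFh u1 y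
    have h2 : F *ᵥ y = E *ᵥ w := by rw [hydef, Matrix.mulVec_mulVec, hFF]
    have h3 : E *ᵥ u1 = lam1⁻¹ • A *ᵥ u1 := by
      rw [hu1, smul_smul, inv_mul_cancel₀ h1pos.ne', one_smul]
    rw [h1, h2, herm_dot hE.1 w u1, h3, smul_dotProduct, hw, smul_zero]
  have hysum : y ⬝ᵥ y = ∑ i, ((b i : Fin n → ℝ) ⬝ᵥ y) ^ 2 := by
    have hs := b.sum_inner_mul_inner (WithLp.toLp 2 y) (WithLp.toLp 2 y)
    rw [inner_eq_dot] at hs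
    simp only [WithLp.ofLp_toLp] at hs
    rw [← hs]
    refine Finset.sum_congr rfl fun i _ => ?_
    rw [inner_eq_dot, inner_eq_dot]
    simp only [WithLp.ofLp_toLp]
    rw [dotProduct_comm (y : Fin n → ℝ)]
    ring
  have hBsum : B *ᵥ y ⬝ᵥ y = ∑ i, μ i * ((b i : Fin n → ℝ) ⬝ᵥ y) ^ 2 := by
    have hs := b.sum_inner_mul_inner (WithLp.toLp 2 y)
      (WithLp.toLp 2 (B *ᵥ y : Fin n → ℝ))
    rw [inner_eq_dot] at hs
    simp only [WithLp.ofLp_toLp] at hs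
    have hL : (y : Fin n → ℝ) ⬝ᵥ (B *ᵥ y) = B *ᵥ y ⬝ᵥ y := dotProduct_comm _ _
    rw [hL] at hs
    rw [← hs]
    refine Finset.sum_congr rfl fun i _ => ?_
    rw [inner_eq_dot, inner_eq_dot]
    simp only [WithLp.ofLp_toLp]
    have h2 : (b i : Fin n → ℝ) ⬝ᵥ (B *ᵥ y) = μ i * ((b i : Fin n → ℝ) ⬝ᵥ y) := by
      rw [dotProduct_comm, herm_dot hB y (b i : Fin n → ℝ), heig i, smul_dotProduct,
        smul_eq_mul]
    rw [h2, dotProduct_comm (y : Fin n → ℝ)]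
    ring
  rw [hEy, hAy, hysum, hBsum, Finset.mul_sum]
  apply Finset.sum_le_sum
  intro i _
  rcases hcase i with ⟨c, hc⟩ | h2
  · have h0 : (b i : Fin n → ℝ) ⬝ᵥ y = 0 := by
      rw [hc, smul_dotProduct, horth, smul_zero]
    rw [h0]
    simp
  · nlinarith [sq_nonneg ((b i : Fin n → ℝ) ⬝ᵥ y)]

lemma endgame (δ u ρ : ℝ) (hδ : 1 < δ) (hu0 : 0 ≤ u) (hu1 : u ≤ 1) (hρ : 0 ≤ ρ)
    (hrr : 4 * δ * (δ - 1) * ρ ^ 2 ≤ 1) (huu : u * (2 * δ - 1) ≤ δ)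
    (hkey : u * (1 - u) ≤ ρ ^ 2 * (δ - u) ^ 2) :
    u ≤ δ * bdelta δ ρ * ρ ^ 2 ∧ δ * bdelta δ ρ * ρ ^ 2 ≤ 1 ∧ 0 ≤ δ * bdelta δ ρ := by
  have hΔ0 : 0 ≤ 1 - 4 * (δ - 1) * δ * ρ ^ 2 := by nlinarith
  set sΔ := Real.sqrt (1 - 4 * (δ - 1) * δ * ρ ^ 2) with hsd
  have hsΔ0 : 0 ≤ sΔ := Real.sqrt_nonneg _
  have hsΔ2 : sΔ ^ 2 = 1 - 4 * (δ - 1) * δ * ρ ^ 2 := Real.sq_sqrt hΔ0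
  have hD : 0 < 1 + 2 * δ * ρ ^ 2 + sΔ := by nlinarith
  have hbd : δ * bdelta δ ρ * ρ ^ 2 = 2 * δ ^ 2 * ρ ^ 2 / (1 + 2 * δ * ρ ^ 2 + sΔ) := by
    rw [bdelta, ← hsd]
    field_simp
    try ring
    try tauto
  have hbd0 : 0 ≤ δ * bdelta δ ρ := by
    rw [bdelta, ← hsd]
    have h1 : (0:ℝ) ≤ 2 * δ := by linarith
    have := div_nonneg h1 hD.le
    nlinarith [this]
  refine ⟨?_, ?_, hbd0⟩
  · -- main bound
    rw [hbd, le_div_iff₀ hD]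
    have hδu : 0 < δ - u := by linarith
    have h1' : u * (1 - u) * (2 * (δ - u)) ≤ ρ ^ 2 * (δ - u) ^ 2 * (2 * (δ - u)) :=
      mul_le_mul_of_nonneg_right hkey (by positivity)
    have h2' : 0 ≤ (δ - u) * (δ - u * (2 * δ - 1)) :=
      mul_nonneg hδu.le (by linarith)
    have hG0 : 0 ≤ 1 + 2 * δ * ρ ^ 2 - 2 * (1 + ρ ^ 2) * u := by
      nlinarith [h1', h2', mul_pos hδu hδu]
    have h4 : 4 * (1 + ρ ^ 2) * (u * (1 - u)) ≤ 4 * (1 + ρ ^ 2) * (ρ ^ 2 * (δ - u) ^ 2) :=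
      mul_le_mul_of_nonneg_left hkey (by positivity)
    have hΔG : 1 - 4 * (δ - 1) * δ * ρ ^ 2 ≤ (1 + 2 * δ * ρ ^ 2 - 2 * (1 + ρ ^ 2) * u) ^ 2 := by
      nlinarith [h4]
    have hsle : sΔ ≤ 1 + 2 * δ * ρ ^ 2 - 2 * (1 + ρ ^ 2) * u := by
      have h5 := Real.sqrt_le_sqrt hΔG
      rwa [← hsd, Real.sqrt_sq hG0] at h5
    have h6 : u * sΔ ≤ u * (1 + 2 * δ * ρ ^ 2 - 2 * (1 + ρ ^ 2) * u) :=
      mul_le_mul_of_nonneg_left hsle hu0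
    nlinarith [h6, hkey]
  · rw [hbd, div_le_one hD]
    nlinarith [hsΔ0]

/-- Theorem `aposterbound`: a posteriori error bound for the normalized approximate
eigenvector in the `A`-norm. -/
theorem a_posteriori_eigenvector_error_bound
    {n : ℕ} (hn : 1 ≤ n)
    (A E : Matrix (Fin n) (Fin n) ℝ) (hA : A.PosDef) (hE : E.PosDef)
    (lam1 lam2 : ℝ) (u1 : Fin n → ℝ)
    (hu1 : A.mulVec u1 = lam1 • E.mulVec u1) (hu1ne : u1 ≠ 0) (hu1norm : normA A u1 = 1)
    (h1pos : 0 < lam1) (h12 : lam1 < lam2)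
    (hsimple : ∀ v : Fin n → ℝ, A.mulVec v = lam1 • E.mulVec v → ∃ c : ℝ, v = c • u1)
    (hlam2 : ∃ v : Fin n → ℝ, v ≠ 0 ∧ A.mulVec v = lam2 • E.mulVec v)
    (hmin : ∀ μ : ℝ, (∃ v : Fin n → ℝ, v ≠ 0 ∧ A.mulVec v = μ • E.mulVec v) →
      μ = lam1 ∨ lam2 ≤ μ)
    (δ : ℝ) (hδ : δ ≥ lam2 / (lam2 - lam1))
    (x : Fin n → ℝ) (hx : x ≠ 0) (hor : 0 < ipA A u1 x)
    (hrho : rhoRes A E x ^ 2 ≤ 1 / (4 * δ * (δ - 1)))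
    (hsin : Real.sin (angleA A u1 x) ^ 2 ≤ δ / (2 * δ - 1)) :
    δ * bdelta δ (rhoRes A E x) * rhoRes A E x ^ 2 ≤ 1 ∧
      normA A (u1 - (normA A x)⁻¹ • x) ≤
        2 * Real.sin (2⁻¹ *
          Real.arcsin (Real.sqrt (δ * bdelta δ (rhoRes A E x)) * rhoRes A E x)) := by
  classical
  have h2pos : 0 < lam2 := h1pos.trans h12
  have hgap : 0 < lam2 - lam1 := by linarith
  have hδgap : lam2 ≤ δ * (lam2 - lam1) := (div_le_iff₀ hgap).mp hδ
  have hδ1 : 1 < δ := by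
    have h1 : 1 < lam2 / (lam2 - lam1) := (one_lt_div hgap).2 (by linarith)
    linarith [hδ]
  have hlam10 : lam1 ≠ 0 := h1pos.ne'
  -- basic quantities
  have hAxx : 0 < ipA A x x := by
    have h0 := hA.dotProduct_mulVec_pos hx
    simp only [star_trivial] at h0
    rw [ipA, dotProduct_comm]; exact h0
  set k := normA A x with hkdef
  have hkpos : 0 < k := by rw [hkdef, normA]; exact Real.sqrt_pos.2 hAxx
  have hk2 : k ^ 2 = ipA A x x := by rw [hkdef, normA, Real.sq_sqrt hAxx.le]
  clear_value k
  have hk0 : k ≠ 0 := hkpos.ne'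
  have ip11 : ipA A u1 u1 = 1 := by
    have h0 : 0 ≤ ipA A u1 u1 := by
      have h1 := hA.posSemidef.dotProduct_mulVec_nonneg u1
      simp only [star_trivial] at h1
      rw [ipA, dotProduct_comm]; exact h1
    have h2 := congrArg (· ^ 2) hu1norm
    simp only [normA] at h2
    rwa [Real.sq_sqrt h0, one_pow] at h2
  set co := ipA A u1 x with hcodef
  have hco : 0 < co := hor
  clear_value co
  -- symmetric dot facts
  have fA1 : A *ᵥ u1 ⬝ᵥ u1 = 1 := ip11
  have fA2 : A *ᵥ u1 ⬝ᵥ x = co := by rw [hcodef, ipA]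
  have fA3 : A *ᵥ x ⬝ᵥ u1 = co := by rw [herm_dot hA.1, ← fA2]
  have fA4 : A *ᵥ x ⬝ᵥ x = k ^ 2 := by rw [hk2, ipA]
  have hEu1 : E.mulVec u1 = lam1⁻¹ • A.mulVec u1 := by
    rw [hu1, smul_smul, inv_mul_cancel₀ h1pos.ne', one_smul]
  have fE2 : E *ᵥ u1 ⬝ᵥ x = lam1⁻¹ * co := by
    rw [hEu1, smul_dotProduct, fA2, smul_eq_mul]
  have fE3 : E *ᵥ x ⬝ᵥ u1 = lam1⁻¹ * co := by rw [herm_dot hE.1, fE2]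
  -- norm identity
  have hnormsq : ipA A (u1 - k⁻¹ • x) (u1 - k⁻¹ • x) = 2 - 2 * (co / k) := by
    rw [ipA, Matrix.mulVec_sub, Matrix.mulVec_smul, sub_dotProduct, smul_dotProduct,
      dotProduct_sub, dotProduct_sub, dotProduct_smul, dotProduct_smul,
      fA1, fA3, fA2, fA4]
    simp only [smul_eq_mul]
    field_simp
    ring
  -- complement vector w
  set w : Fin n → ℝ := x - co • u1 with hwdef
  clear_value w
  have fAu1w : A *ᵥ u1 ⬝ᵥ w = 0 := by
    rw [hwdef, dotProduct_sub, dotProduct_smul, fA2, fA1, smul_eq_mul]; ring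
  have fAwu1 : A *ᵥ w ⬝ᵥ u1 = 0 := by rw [herm_dot hA.1, fAu1w]
  have fAxw : A *ᵥ x ⬝ᵥ w = k ^ 2 - co ^ 2 := by
    rw [hwdef, dotProduct_sub, dotProduct_smul, fA4, fA3, smul_eq_mul]; ring
  have fAww : A *ᵥ w ⬝ᵥ w = k ^ 2 - co ^ 2 := by
    rw [hwdef, Matrix.mulVec_sub, Matrix.mulVec_smul, sub_dotProduct, smul_dotProduct,
      ← hwdef, fAxw, fAu1w, smul_eq_mul]
    ring
  set m := k ^ 2 - co ^ 2 with hmdef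
  clear_value m
  have hm0 : 0 ≤ m := by
    rw [← fAww]
    have h1 := hA.posSemidef.dotProduct_mulVec_nonneg w
    simp only [star_trivial] at h1
    rwa [dotProduct_comm] at h1
  have hmk1 : 1 - (co / k) ^ 2 = m / k ^ 2 := by
    rw [hmdef]; field_simp
  have hangle : Real.sin (angleA A u1 x) ^ 2 = m / k ^ 2 := by
    rw [angleA, hu1norm, one_mul, ← hcodef, ← hkdef, Real.sin_arccos, Real.sq_sqrt]
    · exact hmk1
    · rw [hmk1]; exact div_nonneg hm0 (sq_nonneg k)
  rw [hangle] at hsin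
  have hLHS : normA A (u1 - k⁻¹ • x) = Real.sqrt (2 - 2 * (co / k)) := by
    rw [normA, hnormsq]
  have fEu1w : E *ᵥ u1 ⬝ᵥ w = 0 := by
    rw [hEu1, smul_dotProduct, fAu1w, smul_zero]
  set eE := E *ᵥ x ⬝ᵥ x with heEdef
  have heE : 0 < eE := by
    have h0 := hE.dotProduct_mulVec_pos hx
    simp only [star_trivial] at h0
    rw [heEdef, dotProduct_comm]; exact h0
  clear_value eE
  have heE0 : eE ≠ 0 := heE.ne'
  set Eww := E *ᵥ w ⬝ᵥ w with hEwwdef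
  clear_value Eww
  have hEww0 : 0 ≤ Eww := by
    have h1 := hE.posSemidef.dotProduct_mulVec_nonneg w
    simp only [star_trivial] at h1
    rwa [hEwwdef, dotProduct_comm]
  have fExw : E *ᵥ x ⬝ᵥ w = Eww := by
    rw [hEwwdef]
    nth_rewrite 2 [hwdef]
    rw [Matrix.mulVec_sub, Matrix.mulVec_smul, sub_dotProduct, smul_dotProduct, fEu1w,
      smul_eq_mul, mul_zero, sub_zero]
  have fEdec : Eww = eE - co ^ 2 * lam1⁻¹ := by
    rw [← fExw, hwdef, dotProduct_sub, dotProduct_smul, ← heEdef, fE3, smul_eq_mul]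
    ring
  -- Rayleigh quotient
  set lam := rayleigh A E x with hlamdef
  have hlamval : lam = k ^ 2 / eE := by
    rw [hlamdef, rayleigh, fA4, ← heEdef]
  clear_value lam
  have hlam_eE : lam * eE = k ^ 2 := by
    rw [hlamval]; field_simp
  have hlam_pos : 0 < lam := by
    rw [hlamval]; exact div_pos (pow_pos hkpos 2) heE
  have hlam1eE : lam1 * eE = co ^ 2 + lam1 * Eww := by
    rw [fEdec]
    field_simp
    ring
  -- Fact 2 : complement bound
  have fact2m : lam2 * Eww ≤ m := by
    rw [hEwwdef, ← fAww]
    exact complement_bound A E hA hE lam1 lam2 u1 hu1 h1pos h2pos hsimple hmin w fAu1w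
  -- residual
  set r := residualA A E x with hrdef
  have hrval : r = A *ᵥ x - lam • E *ᵥ x := by
    rw [hrdef, residualA, ← hlamdef]
  clear_value r
  have fr_u1 : r ⬝ᵥ u1 = co - lam * (lam1⁻¹ * co) := by
    rw [hrval, sub_dotProduct, smul_dotProduct, fA3, fE3, smul_eq_mul]
  have fr_w : r ⬝ᵥ w = m - lam * Eww := by
    rw [hrval, sub_dotProduct, smul_dotProduct, fAxw, fExw, smul_eq_mul]
  set R2 := A⁻¹ *ᵥ r ⬝ᵥ r with hR2def
  clear_value R2
  have hR2 : 0 ≤ R2 := by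
    have h1 := hA.inv.posSemidef.dotProduct_mulVec_nonneg r
    simp only [star_trivial] at h1
    rwa [hR2def, dotProduct_comm]
  set ρ := rhoRes A E x with hρdef
  have hρval : ρ = Real.sqrt R2 / k := by
    rw [hρdef, rhoRes, ← hkdef, ← hrdef, ← hR2def]
  clear_value ρ
  have hρ0 : 0 ≤ ρ := by
    rw [hρval]; exact div_nonneg (Real.sqrt_nonneg _) hkpos.le
  have hρ2k : ρ ^ 2 * k ^ 2 = R2 := by
    rw [hρval, div_pow, Real.sq_sqrt hR2]
    field_simp
  -- Cauchy-Schwarz with test vector v0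
  set v0 : Fin n → ℝ := co • w - m • u1 with hv0def
  clear_value v0
  have fr_v0 : r ⬝ᵥ v0 = co * (r ⬝ᵥ w) - m * (r ⬝ᵥ u1) := by
    rw [hv0def, dotProduct_sub, dotProduct_smul, dotProduct_smul, smul_eq_mul, smul_eq_mul]
  have fAv0 : A *ᵥ v0 ⬝ᵥ v0 = m * k ^ 2 := by
    rw [hv0def, Matrix.mulVec_sub, Matrix.mulVec_smul, Matrix.mulVec_smul,
      sub_dotProduct, smul_dotProduct, smul_dotProduct, dotProduct_sub, dotProduct_sub,
      dotProduct_smul, dotProduct_smul, dotProduct_smul, dotProduct_smul,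
      fAww, fAwu1, fAu1w, fA1]
    simp only [smul_eq_mul]
    rw [hmdef]
    ring
  have hdetA : IsUnit A.det := (Matrix.isUnit_iff_isUnit_det A).mp hA.isUnit
  have hAr : A *ᵥ (A⁻¹ *ᵥ r) = r := by
    rw [Matrix.mulVec_mulVec, Matrix.mul_nonsing_inv A hdetA, Matrix.one_mulVec]
  have hcs : (r ⬝ᵥ v0) ^ 2 ≤ R2 * (m * k ^ 2) := by
    have h1 := psd_cs hA.posSemidef (A⁻¹ *ᵥ r) v0
    rw [hAr, fAv0] at h1
    have h2 : r ⬝ᵥ (A⁻¹ *ᵥ r) = R2 := by rw [hR2def, dotProduct_comm]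
    rwa [h2] at h1
  -- translate CS
  set T := lam * (m - lam1 * Eww) with hTdef
  clear_value T
  have hIN1 : co ^ 2 * T ^ 2 ≤ lam1 ^ 2 * (R2 * (m * k ^ 2)) := by
    have e1 : lam1 * (r ⬝ᵥ v0) = co * T := by
      rw [fr_v0, fr_w, fr_u1, hTdef]
      field_simp
      ring
    have e2 : (lam1 * (r ⬝ᵥ v0)) ^ 2 ≤ lam1 ^ 2 * (R2 * (m * k ^ 2)) := by
      have e3 := mul_le_mul_of_nonneg_left hcs (sq_nonneg lam1)
      calc (lam1 * (r ⬝ᵥ v0)) ^ 2 = lam1 ^ 2 * (r ⬝ᵥ v0) ^ 2 := by ring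
        _ ≤ lam1 ^ 2 * (R2 * (m * k ^ 2)) := e3
    calc co ^ 2 * T ^ 2 = (co * T) ^ 2 := by ring
      _ = (lam1 * (r ⬝ᵥ v0)) ^ 2 := by rw [e1]
      _ ≤ _ := e2
  clear hAxx ip11 fA1 fA2 fA3 fA4 hEu1 fE2 fE3 fAu1w fAwu1 fAxw fAww fEu1w fExw fEdec
  clear fr_u1 fr_w fr_v0 fAv0 hdetA hAr hcs hrval
  clear hnormsq hkdef hcodef hwdef heEdef hEwwdef hlamdef hrdef hR2def hρdef hv0def
  clear hu1 hu1ne hu1norm hsimple hmin hlam2 hx hor hδ hk2 hlamval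
  clear r v0 w
  clear hA hE hn h12 hgap
  -- numeric chain
  set X := δ * k ^ 2 - m with hXdef
  clear_value X
  have hXpos : 0 < X := by
    rw [hXdef, hmdef]
    have h1 : 0 < (δ - 1) * k ^ 2 := mul_pos (by linarith) (pow_pos hkpos 2)
    linarith [h1, sq_nonneg co]
  have hEineq : δ * lam1 * Eww ≤ (δ - 1) * m := by
    apply le_of_mul_le_mul_left _ h2pos
    have e1 : δ * lam1 * (lam2 * Eww) ≤ δ * lam1 * m :=
      mul_le_mul_of_nonneg_left fact2m
        (mul_nonneg (by linarith) h1pos.le)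
    have e0 : δ * lam1 ≤ (δ - 1) * lam2 := by linarith [hδgap]
    have e2 : (δ * lam1) * m ≤ ((δ - 1) * lam2) * m :=
      mul_le_mul_of_nonneg_right e0 hm0
    linarith [e1, e2]
  have h_b : δ * lam1 * eE ≤ X := by
    have e1 : δ * (lam1 * eE) = δ * (co ^ 2 + lam1 * Eww) := by rw [hlam1eE]
    have e3 : δ * m = δ * (k ^ 2 - co ^ 2) := by rw [hmdef]
    rw [hXdef]
    linarith [e1, hEineq, e3, hmdef]
  have h_c2 : δ * lam1 * k ^ 2 ≤ lam * X := by
    have e1 := mul_le_mul_of_nonneg_left h_b hlam_pos.le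
    have e2 : δ * lam1 * (lam * eE) = δ * lam1 * k ^ 2 := by rw [hlam_eE]
    linarith [e1, e2]
  have h_a : lam * m * (lam2 - lam1) ≤ lam2 * T := by
    rw [hTdef]
    linarith [mul_le_mul_of_nonneg_left fact2m (mul_nonneg hlam_pos.le h1pos.le)]
  have hIN2 : lam1 * k ^ 2 * m ≤ T * X := by
    apply le_of_mul_le_mul_left _ (show (0:ℝ) < δ * lam2 from mul_pos (by linarith) h2pos)
    have sA : lam2 * (δ * lam1 * k ^ 2) * m ≤ lam2 * (lam * X) * m :=
      mul_le_mul_of_nonneg_right (mul_le_mul_of_nonneg_left h_c2 h2pos.le) hm0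
    have sB : lam2 * (lam * X * m) ≤ δ * (lam2 - lam1) * (lam * X * m) :=
      mul_le_mul_of_nonneg_right hδgap
        (mul_nonneg (mul_nonneg hlam_pos.le hXpos.le) hm0)
    have sC : δ * (lam * m * (lam2 - lam1) * X) ≤ δ * (lam2 * T * X) :=
      mul_le_mul_of_nonneg_left (mul_le_mul_of_nonneg_right h_a hXpos.le) (by linarith)
    linarith [sA, sB, sC]
  -- KEY inequality
  have hKEY : k ^ 2 * m * co ^ 2 ≤ R2 * X ^ 2 := by
    rcases eq_or_lt_of_le hm0 with hmeq | hmlt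
    · rw [← hmeq]
      simp only [mul_zero, zero_mul]
      exact mul_nonneg hR2 (sq_nonneg X)
    · have hP0 : 0 ≤ lam1 * k ^ 2 * m :=
        mul_nonneg (mul_nonneg h1pos.le (sq_nonneg k)) hm0
      have sq1 : (lam1 * k ^ 2 * m) ^ 2 ≤ (T * X) ^ 2 := pow_le_pow_left₀ hP0 hIN2 2
      have t1 : co ^ 2 * (lam1 * k ^ 2 * m) ^ 2 ≤ co ^ 2 * (T * X) ^ 2 :=
        mul_le_mul_of_nonneg_left sq1 (sq_nonneg co)
      have t3 : (co ^ 2 * T ^ 2) * X ^ 2 ≤ (lam1 ^ 2 * (R2 * (m * k ^ 2))) * X ^ 2 :=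
        mul_le_mul_of_nonneg_right hIN1 (sq_nonneg X)
      apply le_of_mul_le_mul_left _
        (show (0:ℝ) < lam1 ^ 2 * k ^ 2 * m from
          mul_pos (mul_pos (pow_pos h1pos 2) (pow_pos hkpos 2)) hmlt)
      linarith [t1, t3]
  -- pass to normalized quantities
  set u := m / k ^ 2 with hudef
  clear_value u
  have hu0 : 0 ≤ u := by
    rw [hudef]; exact div_nonneg hm0 (sq_nonneg k)
  have hu1b : u ≤ 1 := by
    rw [hudef, div_le_one (pow_pos hkpos 2)]
    rw [hmdef]
    linarith [sq_nonneg co]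
  have huk : u * k ^ 2 = m := by rw [hudef]; field_simp
  have hcou : (1 - u) * k ^ 2 = co ^ 2 := by
    rw [hudef, hmdef]; field_simp; ring
  have hXu : (δ - u) * k ^ 2 = X := by
    rw [hudef, hXdef]; field_simp
  have hkey : u * (1 - u) ≤ ρ ^ 2 * (δ - u) ^ 2 := by
    have e1 : ρ ^ 2 * (δ - u) ^ 2 * k ^ 6 = R2 * X ^ 2 := by
      have e0 : ρ ^ 2 * (δ - u) ^ 2 * k ^ 6 = (ρ ^ 2 * k ^ 2) * ((δ - u) * k ^ 2) ^ 2 := by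
        ring
      rw [e0, hρ2k, hXu]
    have e2 : u * (1 - u) * k ^ 6 = k ^ 2 * m * co ^ 2 := by
      have e0 : u * (1 - u) * k ^ 6 = (u * k ^ 2) * ((1 - u) * k ^ 2) * k ^ 2 := by ring
      rw [e0, huk, hcou]; ring
    have e3 : u * (1 - u) * k ^ 6 ≤ ρ ^ 2 * (δ - u) ^ 2 * k ^ 6 := by
      rw [e1, e2]; exact hKEY
    exact le_of_mul_le_mul_right e3 (pow_pos hkpos 6)
  -- angle
  have hcv2 : 1 - (co / k) ^ 2 = u := hmk1
  have huu : u * (2 * δ - 1) ≤ δ :=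
    (le_div_iff₀ (by linarith)).mp hsin
  have hrr : 4 * δ * (δ - 1) * ρ ^ 2 ≤ 1 := by
    have hδδ : 0 < δ * (δ - 1) := mul_pos (by linarith) (by linarith)
    have h1 : ρ ^ 2 * (4 * δ * (δ - 1)) ≤ 1 :=
      (le_div_iff₀ (by linarith [hδδ])).mp hrho
    linarith [h1]
  have hend := endgame δ u ρ hδ1 hu0 hu1b hρ0 hrr huu hkey
  refine ⟨hend.2.1, ?_⟩
  -- final trig part
  set g := Real.sqrt (δ * bdelta δ ρ) * ρ with hgdef
  clear_value g
  have hg0 : 0 ≤ g := by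
    rw [hgdef]; exact mul_nonneg (Real.sqrt_nonneg _) hρ0
  have hg2 : g ^ 2 = δ * bdelta δ ρ * ρ ^ 2 := by
    rw [hgdef, mul_pow, Real.sq_sqrt hend.2.2]
  set θ := Real.arcsin g with hθdef
  clear_value θ
  have hθ0 : 0 ≤ θ := by rw [hθdef]; exact Real.arcsin_nonneg.2 hg0
  have hθpi : θ ≤ π / 2 := by rw [hθdef]; exact Real.arcsin_le_pi_div_two g
  have hcosθ : Real.cos θ = Real.sqrt (1 - g ^ 2) := by
    rw [hθdef]; exact Real.cos_arcsin g
  have hcvge : Real.sqrt (1 - g ^ 2) ≤ co / k := by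
    have h1 : 1 - g ^ 2 ≤ (co / k) ^ 2 := by
      rw [hg2]
      have h2 : (co / k) ^ 2 = 1 - u := by rw [← hcv2]; ring
      rw [h2]
      linarith [hend.1]
    calc Real.sqrt (1 - g ^ 2) ≤ Real.sqrt ((co / k) ^ 2) := Real.sqrt_le_sqrt h1
      _ = co / k := Real.sqrt_sq (div_nonneg hco.le hkpos.le)
  have hsinθ : Real.sin (2⁻¹ * θ) = Real.sqrt ((1 - Real.cos θ) / 2) := by
    have h1 : (2:ℝ)⁻¹ * θ = θ / 2 := by ring
    rw [h1]
    exact Real.sin_half_eq_sqrt (by linarith) (by linarith [Real.pi_pos])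
  rw [hLHS, hsinθ]
  have h4 : (2:ℝ) * Real.sqrt ((1 - Real.cos θ) / 2)
      = Real.sqrt (4 * ((1 - Real.cos θ) / 2)) := by
    rw [show (4:ℝ) * ((1 - Real.cos θ) / 2) = 2 ^ 2 * ((1 - Real.cos θ) / 2) by norm_num,
      Real.sqrt_mul (by norm_num : (0:ℝ) ≤ 2 ^ 2), Real.sqrt_sq (by norm_num : (0:ℝ) ≤ 2)]
  rw [h4]
  apply Real.sqrt_le_sqrt
  rw [hcosθ]
  linarith [hcvge]
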